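/- arXiv:1606.01316 — 4 statements merged into one kernel-verified Lean document; each statement's English description precedes it below -/
import Mathlib

section
/- Let λ > 0, U ∈ ℝ^{n×r} with ‖U‖_F ≤ λ, let f : ℝ^{n×n} → ℝ be differentiable, X = UUᵀ, and let the step size η̂ > 0 satisfy η̂ ≤ 1/(128‖∇f(X)·Q_U Q_Uᵀ‖₂). Then the gradient iterate Ũ = U − η̂·∇f(X)·U satisfies ‖Ũ‖_F ≤ (1 + 1/128)·λ = (129/128)·λ. Consequently, the projection of Ũ onto the Frobenius ball C = {V ∈ ℝ^{n×r} : ‖V‖_F ≤ λ}, given by the scaling Π_C(Ũ) = ξ·Ũ with ξ = min{1, λ/‖Ũ‖_F}, satisfies 128/129 ≤ ξ ≤ 1. -/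
open Matrix

attribute [local instance] Matrix.frobeniusNormedAddCommGroup Matrix.frobeniusNormedSpace

noncomputable section

/-- Frobenius inner product of two real matrices: `⟨A,B⟩ = tr(Aᵀ B)`. -/
def finner {n m : ℕ} (A B : Matrix (Fin n) (Fin m) ℝ) : ℝ := Matrix.trace (Aᵀ * B)

/-- Frobenius norm. -/
def fnorm {n m : ℕ} (A : Matrix (Fin n) (Fin m) ℝ) : ℝ := Real.sqrt (finner A A)

/-- Spectral norm: the operator norm of the induced map between Euclidean spaces. -/
def specNorm {n m : ℕ} (A : Matrix (Fin n) (Fin m) ℝ) : ℝ :=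
  ‖LinearMap.toContinuousLinearMap (Matrix.toEuclideanLin A)‖

/-- `singVal A k` is the `k`-th largest singular value of `A` (`k = 1, …`), via the
Courant–Fischer min-max characterization. -/
def singVal {n m : ℕ} (A : Matrix (Fin n) (Fin m) ℝ) (k : ℕ) : ℝ :=
  ⨆ V : {V : Submodule ℝ (EuclideanSpace ℝ (Fin m)) // Module.finrank ℝ V = k},
    ⨅ x : {x : EuclideanSpace ℝ (Fin m) // x ∈ V.1 ∧ ‖x‖ = 1},
      ‖Matrix.toEuclideanLin A x.1‖

/-- `DIST U V = min_R ‖U - V R‖_F` over `r × r` orthogonal matrices `R`. -/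
def DIST {n r : ℕ} (U V : Matrix (Fin n) (Fin r) ℝ) : ℝ :=
  ⨅ R : Matrix.orthogonalGroup (Fin r) ℝ, fnorm (U - V * (R : Matrix (Fin r) (Fin r) ℝ))

/-- `g` is the gradient of `f` w.r.t. the Frobenius inner product. -/
def IsGradient {n : ℕ} (f : Matrix (Fin n) (Fin n) ℝ → ℝ)
    (g : Matrix (Fin n) (Fin n) ℝ → Matrix (Fin n) (Fin n) ℝ) : Prop :=
  ∀ X, DifferentiableAt ℝ f X ∧ ∀ V, fderiv ℝ f X V = finner (g X) V

/-- `P` is the orthogonal projection matrix onto the column space of `U`: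
the symmetric idempotent matrix with range equal to the column space of `U`. -/
def IsProjMatrix {n r : ℕ} (P : Matrix (Fin n) (Fin n) ℝ)
    (U : Matrix (Fin n) (Fin r) ℝ) : Prop :=
  Pᵀ = P ∧ P * P = P ∧ LinearMap.range P.mulVecLin = LinearMap.range U.mulVecLin

/-- `P` is the Euclidean (Frobenius) projection of `V` onto `C`. -/
def IsFrobProjection {n r : ℕ} (C : Set (Matrix (Fin n) (Fin r) ℝ))
    (V P : Matrix (Fin n) (Fin r) ℝ) : Prop :=
  P ∈ C ∧ ∀ W ∈ C, fnorm (P - V) ≤ fnorm (W - V)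


lemma fnorm_eq_norm {n m : ℕ} (A : Matrix (Fin n) (Fin m) ℝ) : fnorm A = ‖A‖ := by
  rw [Matrix.frobenius_norm_def, fnorm, finner, Matrix.trace]
  rw [Real.sqrt_eq_rpow]
  congr 1
  rw [Finset.sum_comm]
  congr 1; ext i
  simp [Matrix.diag, Matrix.mul_apply, Real.rpow_two, sq, Real.norm_eq_abs, abs_mul_abs_self]

lemma specNorm_nonneg {n m : ℕ} (A : Matrix (Fin n) (Fin m) ℝ) : 0 ≤ specNorm A :=
  norm_nonneg _

lemma specNorm_zero {n m : ℕ} : specNorm (0 : Matrix (Fin n) (Fin m) ℝ) = 0 := by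
  simp [specNorm]

lemma mul_fnorm_le {n m r : ℕ} (A : Matrix (Fin n) (Fin m) ℝ) (B : Matrix (Fin m) (Fin r) ℝ) :
    fnorm (A * B) ≤ specNorm A * fnorm B := by
  rw [fnorm_eq_norm, fnorm_eq_norm]
  have key : ‖A * B‖ ^ 2 ≤ (specNorm A * ‖B‖) ^ 2 := by
    have hAB : ‖A * B‖ ^ 2 = ∑ j, ∑ i, ((A * B) i j) ^ 2 := by
      rw [Matrix.frobenius_norm_def, ← Real.rpow_natCast _ 2,
        ← Real.rpow_mul (by positivity)]
      norm_num
      exact Finset.sum_comm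
    have hB : ‖B‖ ^ 2 = ∑ j, ∑ i, (B i j) ^ 2 := by
      rw [Matrix.frobenius_norm_def, ← Real.rpow_natCast _ 2,
        ← Real.rpow_mul (by positivity)]
      norm_num
      exact Finset.sum_comm
    rw [hAB, mul_pow, hB, Finset.mul_sum]
    apply Finset.sum_le_sum
    intro j _
    set v : EuclideanSpace ℝ (Fin m) := (WithLp.equiv 2 _).symm (fun i => B i j) with hv
    have hnv : ‖v‖ ^ 2 = ∑ i, (B i j) ^ 2 := by
      rw [EuclideanSpace.norm_eq, Real.sq_sqrt (by positivity)]
      congr 1; ext i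
      rw [Real.norm_eq_abs, sq_abs]
      rfl
    have himg : ‖Matrix.toEuclideanLin A v‖ ^ 2 = ∑ i, ((A * B) i j) ^ 2 := by
      rw [hv, Matrix.toEuclideanLin_apply, EuclideanSpace.norm_eq,
        Real.sq_sqrt (by positivity)]
      congr 1; ext i
      rw [Real.norm_eq_abs, sq_abs]
      congr 1
    have hle : ‖Matrix.toEuclideanLin A v‖ ≤ specNorm A * ‖v‖ := by
      have := (LinearMap.toContinuousLinearMap (Matrix.toEuclideanLin A)).le_opNorm v
      simpa [specNorm] using this
    calc ∑ i, ((A * B) i j) ^ 2 = ‖Matrix.toEuclideanLin A v‖ ^ 2 := himg.symm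
      _ ≤ (specNorm A * ‖v‖) ^ 2 := by
          apply sq_le_sq'
          · nlinarith [norm_nonneg (Matrix.toEuclideanLin A v), specNorm_nonneg A, norm_nonneg v]
          · exact hle
      _ = specNorm A ^ 2 * (∑ i, (B i j) ^ 2) := by rw [mul_pow, hnv]
  have h1 : 0 ≤ specNorm A * ‖B‖ := mul_nonneg (specNorm_nonneg A) (norm_nonneg B)
  nlinarith [norm_nonneg (A * B)]

lemma proj_mul_eq {n r : ℕ} (P : Matrix (Fin n) (Fin n) ℝ) (U : Matrix (Fin n) (Fin r) ℝ)
    (hP : IsProjMatrix P U) : P * U = U := by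
  obtain ⟨-, hidem, hrange⟩ := hP
  ext i j
  have hcol : (fun k => U k j) ∈ LinearMap.range U.mulVecLin := by
    exact ⟨Pi.single j 1, by ext k; simp [Matrix.mulVecLin_apply, Matrix.mulVec_single]⟩
  rw [← hrange] at hcol
  obtain ⟨y, hy⟩ := hcol
  have : P.mulVec (P.mulVec y) = P.mulVec y := by
    rw [Matrix.mulVec_mulVec, hidem]
  have h2 : P.mulVec (fun k => U k j) = fun k => U k j := by
    rw [← hy]; exact this
  have := congrFun h2 i
  simpa [Matrix.mul_apply, Matrix.mulVec, dotProduct] using this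

/-- If `‖U‖_F ≤ λ`, `X = UUᵀ`, and the step size satisfies
`0 < η̂ ≤ 1/(128·‖∇f(X)·Q_U Q_Uᵀ‖₂)`, then `Ũ = U − η̂·∇f(X)·U` satisfies
`‖Ũ‖_F ≤ (129/128)·λ`, and hence the scaling factor
`ξ = min{1, λ/‖Ũ‖_F}` of the projection onto the Frobenius ball of radius `λ`
satisfies `128/129 ≤ ξ ≤ 1`. -/
theorem gradient_step_stays_near_ball {n r : ℕ} (lam : ℝ) (hlam : 0 < lam)
    (f : Matrix (Fin n) (Fin n) ℝ → ℝ)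
    (g : Matrix (Fin n) (Fin n) ℝ → Matrix (Fin n) (Fin n) ℝ)
    (hg : IsGradient f g)
    (U : Matrix (Fin n) (Fin r) ℝ) (hU : fnorm U ≤ lam)
    (P : Matrix (Fin n) (Fin n) ℝ) (hP : IsProjMatrix P U)
    (X : Matrix (Fin n) (Fin n) ℝ) (hX : X = U * Uᵀ)
    (η : ℝ) (hη : 0 < η) (hηle : η ≤ 1 / (128 * specNorm (g X * P)))
    (Utld : Matrix (Fin n) (Fin r) ℝ) (hUtld : Utld = U - η • (g X * U))
    (ξ : ℝ) (hξ : ξ = min 1 (lam / fnorm Utld)) :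
    fnorm Utld ≤ 129 / 128 * lam ∧ 128 / 129 ≤ ξ ∧ ξ ≤ 1 := by
  -- basic facts
  have hs0 : 0 < specNorm (g X * P) := by
    rcases lt_or_eq_of_le (specNorm_nonneg (g X * P)) with h | h
    · exact h
    · exfalso
      rw [← h] at hηle
      simp at hηle
      linarith
  have hPU : P * U = U := proj_mul_eq P U hP
  have hgU : g X * U = (g X * P) * U := by rw [Matrix.mul_assoc, hPU]
  have hbound : fnorm (g X * U) ≤ specNorm (g X * P) * fnorm U := by
    rw [hgU]; exact mul_fnorm_le _ _
  have hηs : η * specNorm (g X * P) ≤ 1 / 128 := by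
    rw [le_div_iff₀ (by positivity)] at hηle
    nlinarith
  have hUnn : 0 ≤ fnorm U := by rw [fnorm_eq_norm]; exact norm_nonneg _
  have hstep : fnorm (η • (g X * U)) ≤ (1 / 128) * fnorm U := by
    rw [fnorm_eq_norm, norm_smul, Real.norm_eq_abs, abs_of_pos hη, ← fnorm_eq_norm]
    calc η * fnorm (g X * U) ≤ η * (specNorm (g X * P) * fnorm U) := by
          apply mul_le_mul_of_nonneg_left hbound (le_of_lt hη)
      _ = (η * specNorm (g X * P)) * fnorm U := by ring
      _ ≤ (1 / 128) * fnorm U := mul_le_mul_of_nonneg_right hηs hUnn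
  have hupper : fnorm Utld ≤ 129 / 128 * lam := by
    rw [hUtld, fnorm_eq_norm]
    calc ‖U - η • (g X * U)‖ ≤ ‖U‖ + ‖η • (g X * U)‖ := norm_sub_le _ _
      _ ≤ lam + (1 / 128) * fnorm U := by
          rw [← fnorm_eq_norm, ← fnorm_eq_norm]
          exact add_le_add hU hstep
      _ ≤ lam + (1 / 128) * lam := by
          have := mul_le_mul_of_nonneg_left hU (by norm_num : (0:ℝ) ≤ 1/128)
          linarith
      _ = 129 / 128 * lam := by ring
  -- U ≠ 0
  have hUne : fnorm U ≠ 0 := by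
    intro h0
    have hU0 : U = 0 := by
      rw [fnorm_eq_norm] at h0
      exact norm_eq_zero.mp h0
    have hP0 : P = 0 := by
      have hr : LinearMap.range P.mulVecLin = ⊥ := by
        rw [hP.2.2, hU0]
        simp [Matrix.mulVecLin_zero]
      ext i j
      have : P.mulVec (Pi.single j 1) = 0 := by
        have : P.mulVecLin (Pi.single j 1) ∈ (⊥ : Submodule ℝ (Fin n → ℝ)) := by
          rw [← hr]; exact LinearMap.mem_range_self _ _
        simpa using this
      have := congrFun this i
      simpa [Matrix.mulVec_single] using this
    rw [hP0, mul_zero, specNorm_zero] at hs0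
    exact lt_irrefl 0 hs0
  have hUpos : 0 < fnorm U := lt_of_le_of_ne hUnn (Ne.symm hUne)
  have hlower : 127 / 128 * fnorm U ≤ fnorm Utld := by
    have h1 : fnorm U - fnorm (η • (g X * U)) ≤ fnorm Utld := by
      rw [hUtld, fnorm_eq_norm, fnorm_eq_norm, fnorm_eq_norm]
      exact (le_abs_self _).trans (abs_norm_sub_norm_le _ _)
    linarith
  have hUtldpos : 0 < fnorm Utld := by
    calc (0:ℝ) < 127 / 128 * fnorm U := by positivity
      _ ≤ fnorm Utld := hlower
  refine ⟨hupper, ?_, ?_⟩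
  · rw [hξ]
    apply le_min (by norm_num)
    rw [le_div_iff₀ hUtldpos]
    calc 128 / 129 * fnorm Utld ≤ 128 / 129 * (129 / 128 * lam) := by
          apply mul_le_mul_of_nonneg_left hupper (by norm_num)
      _ = lam := by ring
  · rw [hξ]; exact min_le_left _ _
end
end

section
/- Let H be a real Hilbert space, let f : H → ℝ be Fréchet differentiable, L-smooth and μ-strongly convex with 0 < μ ≤ L, let K ⊆ H be a nonempty closed convex set with 0 ∈ K, and let x⋆ ∈ K be a minimizer of f over K. Let x₀ be the metric projection of −(1/L)·∇f(0) onto K. Then ‖x₀ − x⋆‖ ≤ sqrt(1 − μ/L)·‖x⋆‖. -/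
open Matrix

attribute [local instance] Matrix.frobeniusNormedAddCommGroup Matrix.frobeniusNormedSpace

noncomputable section

open scoped RealInnerProductSpace

section AuxInit

variable {H : Type*} [NormedAddCommGroup H] [InnerProductSpace ℝ H] [CompleteSpace H]

lemma my_hasGradientAt_inner (c z : H) :
    HasGradientAt (fun w => ⟪c, w⟫) c z := by
  rw [hasGradientAt_iff_hasFDerivAt]
  exact (InnerProductSpace.toDual ℝ H c).hasFDerivAt

lemma my_hasGradientAt_sub {f g : H → ℝ} {a b z : H}
    (hf : HasGradientAt f a z) (hg : HasGradientAt g b z) :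
    HasGradientAt (fun w => f w - g w) (a - b) z := by
  rw [hasGradientAt_iff_hasFDerivAt] at *
  have := hf.sub hg
  rw [map_sub]
  exact this

lemma my_line_hasDerivAt {f : H → ℝ} {g : H} {x d : H} (t : ℝ)
    (hf : HasGradientAt f g (x + t • d)) :
    HasDerivAt (fun s : ℝ => f (x + s • d)) ⟪g, d⟫ t := by
  have hc : HasDerivAt (fun s : ℝ => x + s • d) d t := by
    simpa using ((hasDerivAt_id t).smul_const d).const_add x
  have := hf.hasFDerivAt.comp_hasDerivAt t hc
  rw [InnerProductSpace.toDual_apply_apply] at this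
  exact this

/-- descent lemma -/
lemma my_descent (f : H → ℝ) (g : H → H) (hg : ∀ z, HasGradientAt f (g z) z)
    (L : ℝ) (hL : 0 ≤ L) (lip : ∀ a b, ‖g a - g b‖ ≤ L * ‖a - b‖) (x y : H) :
    f y ≤ f x + ⟪g x, y - x⟫ + L / 2 * ‖y - x‖ ^ 2 := by
  set d := y - x with hd
  set ψ : ℝ → ℝ := fun t => f (x + t • d) - t * ⟪g x, d⟫ - L / 2 * t ^ 2 * ‖d‖ ^ 2 with hψ
  have hderiv : ∀ t : ℝ, HasDerivAt ψ
      (⟪g (x + t • d), d⟫ - ⟪g x, d⟫ - L * t * ‖d‖ ^ 2) t := by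
    intro t
    have h1 : HasDerivAt (fun s : ℝ => f (x + s • d)) ⟪g (x + t • d), d⟫ t :=
      my_line_hasDerivAt t (hg (x + t • d))
    have h2 : HasDerivAt (fun s : ℝ => s * ⟪g x, d⟫) ⟪g x, d⟫ t := by
      simpa using (hasDerivAt_id t).mul_const ⟪g x, d⟫
    have h3 : HasDerivAt (fun s : ℝ => L / 2 * s ^ 2 * ‖d‖ ^ 2)
        (L * t * ‖d‖ ^ 2) t := by
      have := ((hasDerivAt_pow 2 t).const_mul (L / 2)).mul_const (‖d‖ ^ 2)
      exact this.congr_deriv (by push_cast; ring)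
    exact (h1.sub h2).sub h3
  have hmono : AntitoneOn ψ (Set.Icc 0 1) := by
    apply antitoneOn_of_deriv_nonpos (convex_Icc 0 1)
    · exact fun t _ => (hderiv t).continuousAt.continuousWithinAt
    · exact fun t _ => ((hderiv t).differentiableAt).differentiableWithinAt
    · intro t ht
      rw [interior_Icc] at ht
      rw [(hderiv t).deriv]
      have hid : ⟪g (x + t • d) - g x, d⟫ ≤ L * t * ‖d‖ ^ 2 := by
        calc ⟪g (x + t • d) - g x, d⟫ ≤ ‖g (x + t • d) - g x‖ * ‖d‖ :=
              real_inner_le_norm _ _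
          _ ≤ (L * ‖(x + t • d) - x‖) * ‖d‖ := by
              apply mul_le_mul_of_nonneg_right (lip _ _) (norm_nonneg _)
          _ = L * t * ‖d‖ ^ 2 := by
              rw [show (x + t • d) - x = t • d by abel, norm_smul,
                Real.norm_of_nonneg ht.1.le]
              ring
      rw [inner_sub_left] at hid
      linarith
  have h01 := hmono (Set.mem_Icc.2 ⟨le_refl 0, zero_le_one⟩)
    (Set.mem_Icc.2 ⟨zero_le_one, le_refl 1⟩) zero_le_one
  have hψ0 : ψ 0 = f x := by simp [hψ]
  have hψ1 : ψ 1 = f y - ⟪g x, d⟫ - L / 2 * ‖d‖ ^ 2 := by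
    simp [hψ, hd]
  rw [hψ0, hψ1] at h01
  linarith

/-- cocoercivity -/
lemma my_coco (f : H → ℝ) (hdiff : Differentiable ℝ f) (L : ℝ) (hL : 0 < L)
    (hsmooth : ∀ x y, ‖gradient f x - gradient f y‖ ≤ L * ‖x - y‖)
    (hcvx : ∀ x y, f x + ⟪gradient f x, y - x⟫ ≤ f y) (x y : H) :
    1 / L * ‖gradient f x - gradient f y‖ ^ 2 ≤ ⟪gradient f x - gradient f y, x - y⟫ := by
  have key : ∀ a b : H, f a ≤ f b + ⟪gradient f a, a - b⟫
      - 1 / (2 * L) * ‖gradient f b - gradient f a‖ ^ 2 := by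
    intro a b
    set φ : H → ℝ := fun z => f z - ⟪gradient f a, z⟫ with hφ
    set gφ : H → H := fun z => gradient f z - gradient f a with hgφ
    have hgrad : ∀ z, HasGradientAt φ (gφ z) z := fun z =>
      my_hasGradientAt_sub (hdiff z).hasGradientAt (my_hasGradientAt_inner _ z)
    have hlip : ∀ u v, ‖gφ u - gφ v‖ ≤ L * ‖u - v‖ := by
      intro u v
      simpa [hgφ, sub_sub_sub_cancel_right] using hsmooth u v
    have hmin : ∀ z, φ a ≤ φ z := by
      intro z
      have := hcvx a z
      simp only [hφ, inner_sub_right] at *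
      linarith
    have hdes := my_descent φ gφ hgrad L hL.le hlip b (b - (1 / L) • gφ b)
    have h1 : (b - (1 / L) • gφ b) - b = -((1 / L) • gφ b) := by abel
    rw [h1] at hdes
    have h2 : ⟪gφ b, -((1 / L) • gφ b)⟫ = -(1 / L) * ‖gφ b‖ ^ 2 := by
      rw [inner_neg_right, real_inner_smul_right, real_inner_self_eq_norm_sq]
      ring
    have h3 : ‖-((1 / L) • gφ b)‖ ^ 2 = (1 / L) ^ 2 * ‖gφ b‖ ^ 2 := by
      rw [norm_neg, norm_smul, Real.norm_eq_abs, abs_of_pos (by positivity : (0:ℝ) < 1 / L)]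
      ring
    rw [h2, h3] at hdes
    have h4 : L / 2 * ((1 / L) ^ 2 * ‖gφ b‖ ^ 2) = 1 / (2 * L) * ‖gφ b‖ ^ 2 := by
      field_simp
    have hfin : φ a ≤ φ b - 1 / (2 * L) * ‖gφ b‖ ^ 2 := by
      have h5 : 1 / L * ‖gφ b‖ ^ 2 = 2 * (1 / (2 * L) * ‖gφ b‖ ^ 2) := by
        field_simp
      have := hmin (b - (1 / L) • gφ b)
      linarith [hdes, h4, h5]
    simp only [hφ, hgφ] at hfin
    have hinner : (⟪gradient f a, a⟫ : ℝ) - ⟪gradient f a, b⟫ = ⟪gradient f a, a - b⟫ := by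
      rw [inner_sub_right]
    linarith [hfin, hinner.ge]
  have k1 := key x y
  have k2 := key y x
  have hsym : ‖gradient f x - gradient f y‖ = ‖gradient f y - gradient f x‖ :=
    norm_sub_rev _ _
  have hi1 : (⟪gradient f x, x - y⟫ : ℝ) + ⟪gradient f y, y - x⟫
      = ⟪gradient f x - gradient f y, x - y⟫ := by
    rw [inner_sub_left]
    have : (⟪gradient f y, y - x⟫ : ℝ) = -⟪gradient f y, x - y⟫ := by
      rw [← inner_neg_right]; congr 1; abel
    linarith [this]
  have hsym2 : ‖gradient f x - gradient f y‖ ^ 2 = ‖gradient f y - gradient f x‖ ^ 2 := by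
    rw [hsym]
  have h5 : 1 / L * ‖gradient f y - gradient f x‖ ^ 2
      = 2 * (1 / (2 * L) * ‖gradient f y - gradient f x‖ ^ 2) := by field_simp
  have h6 : 1 / (2 * L) * ‖gradient f x - gradient f y‖ ^ 2
      = 1 / (2 * L) * ‖gradient f y - gradient f x‖ ^ 2 := by rw [hsym2]
  rw [hsym]
  linarith [k1, k2, hi1, h5, h6]

/-- projection variational inequality -/
lemma my_proj_vi (K : Set H) (hK : Convex ℝ K) (v p : H) (hp : p ∈ K)
    (hmin : ∀ z ∈ K, ‖v - p‖ ≤ ‖v - z‖) : ∀ z ∈ K, ⟪v - p, z - p⟫ ≤ 0 := by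
  intro z hz
  have key : ∀ t : ℝ, 0 < t → t ≤ 1 → ⟪v - p, z - p⟫ ≤ t / 2 * ‖z - p‖ ^ 2 := by
    intro t ht ht1
    have hmem : p + t • (z - p) ∈ K := by
      have := hK hp hz (by linarith : (0:ℝ) ≤ 1 - t) ht.le (by ring)
      convert this using 1
      rw [smul_sub]
      module
    have hle := hmin _ hmem
    have hsq : ‖v - (p + t • (z - p))‖ ^ 2
        = ‖v - p‖ ^ 2 - 2 * t * ⟪v - p, z - p⟫ + t ^ 2 * ‖z - p‖ ^ 2 := by
      have : v - (p + t • (z - p)) = (v - p) - t • (z - p) := by abel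
      rw [this, norm_sub_sq_real, real_inner_smul_right, norm_smul, Real.norm_eq_abs,
        abs_of_pos ht]
      ring
    have hle2 : ‖v - p‖ ^ 2 ≤ ‖v - (p + t • (z - p))‖ ^ 2 := by
      have := hmin _ hmem
      nlinarith [norm_nonneg (v - p), norm_nonneg (v - (p + t • (z - p)))]
    rw [hsq] at hle2
    nlinarith
  by_contra hcon
  push_neg at hcon
  rcases eq_or_ne (‖z - p‖) 0 with h0 | h0
  · have := key 1 one_pos le_rfl
    rw [h0] at this
    nlinarith
  · have hnp : 0 < ‖z - p‖ ^ 2 := by positivity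
    set ε := ⟪v - p, z - p⟫ with hε
    set t := min 1 (ε / ‖z - p‖ ^ 2) with htdef
    have htpos : 0 < t := lt_min one_pos (by positivity)
    have ht1 : t ≤ 1 := min_le_left _ _
    have := key t htpos ht1
    have h2 : t / 2 * ‖z - p‖ ^ 2 ≤ ε / 2 := by
      have : t ≤ ε / ‖z - p‖ ^ 2 := min_le_right _ _
      calc t / 2 * ‖z - p‖ ^ 2 ≤ (ε / ‖z - p‖ ^ 2) / 2 * ‖z - p‖ ^ 2 := by nlinarith
        _ = ε / 2 := by field_simp
    nlinarith

end AuxInit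

/-- Initialization guarantee in a real Hilbert space: if `f` is
differentiable, `L`-smooth and `μ`-strongly convex with `0 < μ ≤ L`, `K` is a nonempty
closed convex set with `0 ∈ K`, `x⋆` minimizes `f` over `K`, and `x₀` is the metric
projection of `−(1/L)·∇f(0)` onto `K`, then `‖x₀ − x⋆‖ ≤ √(1 − μ/L)·‖x⋆‖`. -/
theorem init_dist_bound {H : Type*} [NormedAddCommGroup H] [InnerProductSpace ℝ H]
    [CompleteSpace H]
    (f : H → ℝ) (hdiff : Differentiable ℝ f)
    (L μ : ℝ) (hμ : 0 < μ) (hμL : μ ≤ L)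
    (hsmooth : ∀ x y, ‖gradient f x - gradient f y‖ ≤ L * ‖x - y‖)
    (hconv : ∀ x y, f y ≥ f x + ⟪gradient f x, y - x⟫ + μ / 2 * ‖y - x‖ ^ 2)
    (K : Set H) (hKne : K.Nonempty) (hKclosed : IsClosed K) (hKconv : Convex ℝ K)
    (h0K : (0 : H) ∈ K)
    (xstar : H) (hxstarK : xstar ∈ K) (hmin : ∀ z ∈ K, f xstar ≤ f z)
    (x0 : H) (hx0K : x0 ∈ K)
    (hx0proj : ∀ z ∈ K,
      ‖-((1 / L) • gradient f 0) - x0‖ ≤ ‖-((1 / L) • gradient f 0) - z‖) :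
    ‖x0 - xstar‖ ≤ Real.sqrt (1 - μ / L) * ‖xstar‖ := by
  have hL : 0 < L := lt_of_lt_of_le hμ hμL
  set g0 := gradient f 0 with hg0
  set gs := gradient f xstar with hgs
  set v : H := -((1 / L) • g0) with hv
  set w : H := xstar - (1 / L) • gs with hw
  have hcvx : ∀ x y, f x + ⟪gradient f x, y - x⟫ ≤ f y := by
    intro x y
    have h := hconv x y
    have hp : (0:ℝ) ≤ μ / 2 * ‖y - x‖ ^ 2 := by positivity
    linarith
  -- first-order optimality at xstar
  have hopt : ∀ z ∈ K, (0:ℝ) ≤ ⟪gs, z - xstar⟫ := by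
    intro z hz
    have key : ∀ t : ℝ, 0 < t → t ≤ 1 →
        -(L * t * ‖z - xstar‖ ^ 2) ≤ ⟪gs, z - xstar⟫ := by
      intro t ht ht1
      set wt := xstar + t • (z - xstar) with hwt
      have hmem : wt ∈ K := by
        have := hKconv hxstarK hz (by linarith : (0:ℝ) ≤ 1 - t) ht.le (by ring)
        convert this using 1
        rw [hwt, smul_sub]; module
      have h1 := hconv wt xstar
      have h2 := hmin wt hmem
      have h3 : xstar - wt = -(t • (z - xstar)) := by rw [hwt]; abel
      rw [h3] at h1
      have h4 : (⟪gradient f wt, -(t • (z - xstar))⟫ : ℝ)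
          = -(t * ⟪gradient f wt, z - xstar⟫) := by
        rw [inner_neg_right, real_inner_smul_right]
      rw [h4] at h1
      have hp : (0:ℝ) ≤ μ / 2 * ‖-(t • (z - xstar))‖ ^ 2 := by positivity
      have h5 : 0 ≤ t * ⟪gradient f wt, z - xstar⟫ := by linarith
      have h6 : 0 ≤ ⟪gradient f wt, z - xstar⟫ := by
        by_contra hc
        push_neg at hc
        nlinarith
      have h7 : (⟪gradient f wt - gs, z - xstar⟫ : ℝ)
          = ⟪gradient f wt, z - xstar⟫ - ⟪gs, z - xstar⟫ := by
        rw [inner_sub_left]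
      have h8 : (⟪gradient f wt - gs, z - xstar⟫ : ℝ) ≤ L * t * ‖z - xstar‖ ^ 2 := by
        calc (⟪gradient f wt - gs, z - xstar⟫ : ℝ)
            ≤ ‖gradient f wt - gs‖ * ‖z - xstar‖ := real_inner_le_norm _ _
          _ ≤ (L * ‖wt - xstar‖) * ‖z - xstar‖ :=
              mul_le_mul_of_nonneg_right (hsmooth wt xstar) (norm_nonneg _)
          _ = L * t * ‖z - xstar‖ ^ 2 := by
              rw [show wt - xstar = t • (z - xstar) by rw [hwt]; abel, norm_smul,
                Real.norm_of_nonneg ht.le]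
              ring
      linarith
    by_contra hcon
    push_neg at hcon
    rcases eq_or_ne ‖z - xstar‖ 0 with h0 | h0
    · have := key 1 one_pos le_rfl
      rw [h0] at this
      simp at this
      linarith
    · have hnp : 0 < L * ‖z - xstar‖ ^ 2 := by positivity
      set c := (⟪gs, z - xstar⟫ : ℝ) with hc
      set t := min 1 (-c / (2 * (L * ‖z - xstar‖ ^ 2))) with htdef
      have htpos : 0 < t := lt_min one_pos (div_pos (by linarith) (by positivity))
      have := key t htpos (min_le_left _ _)
      have hub : t ≤ -c / (2 * (L * ‖z - xstar‖ ^ 2)) := min_le_right _ _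
      have h2 : L * t * ‖z - xstar‖ ^ 2 ≤ -c / 2 := by
        have := mul_le_mul_of_nonneg_right hub hnp.le
        calc L * t * ‖z - xstar‖ ^ 2 = t * (L * ‖z - xstar‖ ^ 2) := by ring
          _ ≤ (-c / (2 * (L * ‖z - xstar‖ ^ 2))) * (L * ‖z - xstar‖ ^ 2) := this
          _ = -c / 2 := by field_simp
      linarith
  -- variational inequalities
  have hVIx0 : ∀ z ∈ K, (⟪v - x0, z - x0⟫ : ℝ) ≤ 0 :=
    my_proj_vi K hKconv v x0 hx0K hx0proj
  have hVIxs : ∀ z ∈ K, (⟪w - xstar, z - xstar⟫ : ℝ) ≤ 0 := by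
    intro z hz
    have : w - xstar = -((1 / L) • gs) := by rw [hw]; abel
    rw [this, inner_neg_left, real_inner_smul_left]
    have := hopt z hz
    have h1L : (0:ℝ) ≤ 1 / L := by positivity
    nlinarith
  -- contraction through the inner product
  have hkey : ‖x0 - xstar‖ ^ 2 ≤ ⟪v - w, x0 - xstar⟫ := by
    have a1 := hVIx0 xstar hxstarK
    have a2 := hVIxs x0 hx0K
    have e1 : (⟪x0 - xstar, x0 - xstar⟫ : ℝ)
        = ⟪x0 - v, x0 - xstar⟫ + ⟪v - w, x0 - xstar⟫ + ⟪w - xstar, x0 - xstar⟫ := by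
      rw [← inner_add_left, ← inner_add_left]
      congr 1
      abel
    have e2 : (⟪x0 - v, x0 - xstar⟫ : ℝ) = ⟪v - x0, xstar - x0⟫ := by
      rw [show x0 - v = -(v - x0) by abel, show x0 - xstar = -(xstar - x0) by abel,
        inner_neg_neg]
    have e3 : (⟪x0 - xstar, x0 - xstar⟫ : ℝ) = ‖x0 - xstar‖ ^ 2 :=
      real_inner_self_eq_norm_sq _
    linarith [e1, e2, e3, a1, a2]
  have hle : ‖x0 - xstar‖ ≤ ‖v - w‖ := by
    rcases eq_or_lt_of_le (norm_nonneg (x0 - xstar)) with h0 | h0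
    · rw [← h0]; exact norm_nonneg _
    · nlinarith [real_inner_le_norm (v - w) (x0 - xstar), hkey]
  -- gradient-step contraction bound on ‖v - w‖
  have hco := my_coco f hdiff L hL hsmooth hcvx 0 xstar
  rw [← hg0, ← hgs] at hco
  have hmono : μ * ‖(0:H) - xstar‖ ^ 2 ≤ ⟪g0 - gs, (0:H) - xstar⟫ := by
    have c1 := hconv 0 xstar
    have c2 := hconv xstar 0
    rw [← hg0] at c1
    rw [← hgs] at c2
    have e1 : (⟪g0, (0:H) - xstar⟫ : ℝ) = -⟪g0, xstar - (0:H)⟫ := by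
      rw [show (0:H) - xstar = -(xstar - (0:H)) by abel, inner_neg_right]
    have e2 : μ / 2 * ‖xstar - (0:H)‖ ^ 2 = μ / 2 * ‖(0:H) - xstar‖ ^ 2 := by
      rw [norm_sub_rev]
    rw [inner_sub_left]
    linarith [c1, c2, e1, e2]
  have hvw : v - w = ((0:H) - xstar) - (1 / L) • (g0 - gs) := by
    rw [hv, hw, smul_sub]
    abel
  have hsq : ‖v - w‖ ^ 2 ≤ (1 - μ / L) * ‖xstar‖ ^ 2 := by
    rw [hvw]
    have expand : ‖((0:H) - xstar) - (1 / L) • (g0 - gs)‖ ^ 2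
        = ‖(0:H) - xstar‖ ^ 2 - 2 * (1 / L * ⟪(0:H) - xstar, g0 - gs⟫)
          + (1 / L) ^ 2 * ‖g0 - gs‖ ^ 2 := by
      rw [norm_sub_sq_real, real_inner_smul_right, norm_smul, Real.norm_eq_abs,
        abs_of_pos (by positivity : (0:ℝ) < 1 / L)]
      ring
    rw [expand]
    have hnorm0 : ‖(0:H) - xstar‖ = ‖xstar‖ := by rw [zero_sub, norm_neg]
    rw [hnorm0]
    rw [hnorm0] at hmono
    have h1L : (0:ℝ) ≤ 1 / L := by positivity
    have m1 := mul_le_mul_of_nonneg_left hco h1L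
    have m2 := mul_le_mul_of_nonneg_left hmono h1L
    have eq3 : (1 - μ / L) * ‖xstar‖ ^ 2 = ‖xstar‖ ^ 2 - 1 / L * (μ * ‖xstar‖ ^ 2) := by
      field_simp
    have eq4 : (1 / L) ^ 2 * ‖g0 - gs‖ ^ 2 = 1 / L * (1 / L * ‖g0 - gs‖ ^ 2) := by ring
    have eq5 : 1 / L * (⟪(0:H) - xstar, g0 - gs⟫ : ℝ)
        = 1 / L * ⟪g0 - gs, (0:H) - xstar⟫ := by rw [real_inner_comm]
    linarith [m1, m2, eq3, eq4, eq5]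
  have h1μL : (0:ℝ) ≤ 1 - μ / L := by
    have : μ / L ≤ 1 := (div_le_one hL).2 hμL
    linarith
  calc ‖x0 - xstar‖ ≤ ‖v - w‖ := hle
    _ = Real.sqrt (‖v - w‖ ^ 2) := (Real.sqrt_sq (norm_nonneg _)).symm
    _ ≤ Real.sqrt ((1 - μ / L) * ‖xstar‖ ^ 2) := Real.sqrt_le_sqrt hsq
    _ = Real.sqrt (1 - μ / L) * ‖xstar‖ := by
        rw [Real.sqrt_mul h1μL, Real.sqrt_sq (norm_nonneg _)]
end
end

section
/- For any matrices U, V ∈ ℝ^{n×r}, ‖UUᵀ − VVᵀ‖_F² ≥ 2(√2 − 1)·σ_r(U)²·DIST(U, V)². -/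
open Matrix

attribute [local instance] Matrix.frobeniusNormedAddCommGroup Matrix.frobeniusNormedSpace

noncomputable section

section TuAux

lemma finner_eq_sum {n m : ℕ} (A B : Matrix (Fin n) (Fin m) ℝ) :
    finner A B = ∑ j, ∑ i, A i j * B i j := by
  simp [finner, Matrix.trace, Matrix.diag, Matrix.mul_apply]

lemma finner_self_nonneg {n m : ℕ} (A : Matrix (Fin n) (Fin m) ℝ) : 0 ≤ finner A A := by
  rw [finner_eq_sum]
  exact Finset.sum_nonneg fun j _ => Finset.sum_nonneg fun i _ => mul_self_nonneg _

lemma fnorm_nonneg {n m : ℕ} (A : Matrix (Fin n) (Fin m) ℝ) : 0 ≤ fnorm A := Real.sqrt_nonneg _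

lemma fnorm_sq {n m : ℕ} (A : Matrix (Fin n) (Fin m) ℝ) : fnorm A ^ 2 = finner A A :=
  Real.sq_sqrt (finner_self_nonneg A)

lemma singVal_nonneg {n m : ℕ} (A : Matrix (Fin n) (Fin m) ℝ) (k : ℕ) : 0 ≤ singVal A k :=
  Real.iSup_nonneg fun V => Real.iInf_nonneg fun x => norm_nonneg _

lemma singVal_le_norm {n r : ℕ} (U : Matrix (Fin n) (Fin r) ℝ) (x : EuclideanSpace ℝ (Fin r))
    (hx : ‖x‖ = 1) : singVal U r ≤ ‖Matrix.toEuclideanLin U x‖ := by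
  rw [singVal]
  have hne : Nonempty {V : Submodule ℝ (EuclideanSpace ℝ (Fin r)) // Module.finrank ℝ V = r} :=
    ⟨⟨⊤, by simp [finrank_euclideanSpace_fin]⟩⟩
  refine ciSup_le fun V => ?_
  have hVtop : V.1 = ⊤ :=
    Submodule.eq_top_of_finrank_eq (by rw [V.2, finrank_euclideanSpace_fin])
  have hxV : x ∈ V.1 := by rw [hVtop]; trivial
  exact ciInf_le ⟨0, by rintro y ⟨z, rfl⟩; exact norm_nonneg _⟩
    (⟨x, hxV, hx⟩ : {x : EuclideanSpace ℝ (Fin r) // x ∈ V.1 ∧ ‖x‖ = 1})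

lemma singVal_sq_le_quad {n r : ℕ} (U : Matrix (Fin n) (Fin r) ℝ) (v : Fin r → ℝ)
    (hv : v ⬝ᵥ v = 1) : singVal U r ^ 2 ≤ v ⬝ᵥ (Uᵀ * U).mulVec v := by
  set x : EuclideanSpace ℝ (Fin r) := (WithLp.equiv 2 (Fin r → ℝ)).symm v with hxdef
  have hxnorm : ‖x‖ = 1 := by
    rw [EuclideanSpace.norm_eq]
    have h1 : ∑ i, ‖x i‖^2 = v ⬝ᵥ v := by
      refine Eq.trans (Finset.sum_congr rfl fun i _ => ?_) rfl
      simp [hxdef, Real.norm_eq_abs, sq_abs, sq]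
    rw [h1, hv, Real.sqrt_one]
  have h1 : singVal U r ≤ ‖Matrix.toEuclideanLin U x‖ := singVal_le_norm U x hxnorm
  have h2 : ‖Matrix.toEuclideanLin U x‖^2 = v ⬝ᵥ (Uᵀ * U).mulVec v := by
    have hy : Matrix.toEuclideanLin U x = (WithLp.equiv 2 (Fin n → ℝ)).symm (U.mulVec v) := by
      rw [hxdef]
      exact Matrix.toEuclideanLin_apply_piLp_toLp U v
    rw [hy, EuclideanSpace.norm_eq, Real.sq_sqrt (Finset.sum_nonneg fun i _ => sq_nonneg _)]
    have hdot : v ⬝ᵥ (Uᵀ * U).mulVec v = (U.mulVec v) ⬝ᵥ (U.mulVec v) := by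
      rw [← Matrix.mulVec_mulVec, Matrix.dotProduct_mulVec, Matrix.vecMul_transpose]
    rw [hdot]
    refine Eq.trans (Finset.sum_congr rfl fun i _ => ?_) rfl
    simp [Real.norm_eq_abs, sq_abs, sq]
  calc singVal U r ^ 2 ≤ ‖Matrix.toEuclideanLin U x‖^2 :=
        pow_le_pow_left₀ (singVal_nonneg U r) h1 2
    _ = _ := h2

lemma DIST_nonneg {n r : ℕ} (U V : Matrix (Fin n) (Fin r) ℝ) : 0 ≤ DIST U V :=
  Real.iInf_nonneg fun R => fnorm_nonneg _

lemma DIST_le {n r : ℕ} (U V : Matrix (Fin n) (Fin r) ℝ) (R' : Matrix (Fin r) (Fin r) ℝ)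
    (hR : R'ᵀ * R' = 1) : DIST U V ≤ fnorm (U - V * R') := by
  have hstar : star R' = R'ᵀ := by
    rw [Matrix.star_eq_conjTranspose, Matrix.conjTranspose_eq_transpose_of_trivial]
  have hmem : R' ∈ Matrix.orthogonalGroup (Fin r) ℝ := by
    rw [Matrix.mem_unitaryGroup_iff']
    rw [hstar]
    exact hR
  exact ciInf_le ⟨0, by rintro y ⟨z, rfl⟩; exact fnorm_nonneg _⟩
    (⟨R', hmem⟩ : Matrix.orthogonalGroup (Fin r) ℝ)

lemma scalar_core (g p d s : ℝ) (hg : 0 ≤ g) (hp : 0 ≤ p) (hs : 0 ≤ s)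
    (hcon : 2 * s ≤ g + 2 * p + d) :
    2 * (Real.sqrt 2 - 1) * s * g ≤ g ^ 2 / 2 + 2 * p * g + d ^ 2 / 2 := by
  have h2 : (Real.sqrt 2) ^ 2 = 2 := Real.sq_sqrt (by norm_num)
  have h1 : (1:ℝ) ≤ Real.sqrt 2 := by nlinarith [Real.sqrt_nonneg 2]
  have h32 : Real.sqrt 2 ≤ 3/2 := by nlinarith [Real.sqrt_nonneg 2]
  set c := Real.sqrt 2 with hc
  set e := g + 2 * p + d - 2 * s with he'
  have he : 0 ≤ e := by simp [he']; linarith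
  rcases le_total g s with hgs | hgs
  · -- F = ½(e−2t)² + ge + g((4−2c)s − g), t = p−s+g
    have k1 : 0 ≤ (4 - 2*c) * s - g := by nlinarith
    nlinarith [sq_nonneg (e - 2*(p - s + g)), mul_nonneg hg he, mul_nonneg hg k1]
  rcases le_total g (2*s) with hg2 | hg2
  · have hcs : c^2 * s^2 = 2 * s^2 := by rw [h2]
    nlinarith [mul_nonneg hp (by linarith : (0:ℝ) ≤ g - s),
      mul_nonneg he (by linarith : (0:ℝ) ≤ 2*s - g), sq_nonneg (g - c*s), sq_nonneg (e - 2*p),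
      hcs]
  · have k1 : 0 ≤ (c+1)*g - 4*s := by nlinarith
    nlinarith [sq_nonneg (e - 2*p - g + 2*s), mul_nonneg hp hg, mul_nonneg hg k1,
      mul_nonneg hp (by linarith : (0:ℝ) ≤ g - s)]

-- conjugation helpers
variable {r : ℕ}

lemma trace_conj (O X : Matrix (Fin r) (Fin r) ℝ) (hO2 : O * Oᵀ = 1) :
    Matrix.trace (Oᵀ * X * O) = Matrix.trace X := by
  rw [Matrix.trace_mul_cycle, hO2, Matrix.one_mul]

lemma tu_conj_mul (O X Y : Matrix (Fin r) (Fin r) ℝ) (hO2 : O * Oᵀ = 1) :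
    Oᵀ * (X * Y) * O = (Oᵀ * X * O) * (Oᵀ * Y * O) := by
  have : (Oᵀ * X * O) * (Oᵀ * Y * O) = Oᵀ * X * (O * Oᵀ) * Y * O := by
    simp only [Matrix.mul_assoc]
  rw [this, hO2, Matrix.mul_one]
  simp only [Matrix.mul_assoc]

lemma conj_diag_entry (O X : Matrix (Fin r) (Fin r) ℝ) (i : Fin r) :
    (Oᵀ * X * O) i i = (fun a => O a i) ⬝ᵥ X.mulVec (fun a => O a i) := by
  simp only [Matrix.mul_apply, Matrix.transpose_apply, dotProduct, Matrix.mulVec,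
    Finset.sum_mul, Finset.mul_sum]
  rw [Finset.sum_comm]
  refine Finset.sum_congr rfl fun a _ => Finset.sum_congr rfl fun b _ => by ring

lemma trace_mul_diagonal' (M : Matrix (Fin r) (Fin r) ℝ) (d : Fin r → ℝ) :
    Matrix.trace (M * Matrix.diagonal d) = ∑ i, M i i * d i := by
  simp [Matrix.trace, Matrix.mul_apply, Matrix.diagonal]


-- trace ring identity
lemma trace_split (A B Q : Matrix (Fin r) (Fin r) ℝ) :
    Matrix.trace (A*A) + Matrix.trace (B*B) - 2*Matrix.trace (Q*Q) =
      1/2 * Matrix.trace ((A + B - (2:ℝ)•Q) * (A + B - (2:ℝ)•Q))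
      + 2 * Matrix.trace (Q * (A + B - (2:ℝ)•Q))
      + 1/2 * Matrix.trace ((A - B) * (A - B)) := by
  simp only [Matrix.mul_add, Matrix.add_mul, Matrix.mul_sub, Matrix.sub_mul,
    Matrix.smul_mul, Matrix.mul_smul, Matrix.trace_add, Matrix.trace_sub, Matrix.trace_smul,
    smul_eq_mul]
  rw [Matrix.trace_mul_comm A B, Matrix.trace_mul_comm A Q, Matrix.trace_mul_comm B Q]
  ring



lemma tu_dot_self_nonneg {k : ℕ} (w : Fin k → ℝ) : 0 ≤ w ⬝ᵥ w :=
  Finset.sum_nonneg fun i _ => mul_self_nonneg _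

lemma trace_outer_pair {n r : ℕ} (X Y : Matrix (Fin n) (Fin r) ℝ) :
    Matrix.trace ((X*Xᵀ)*(Y*Yᵀ)) = Matrix.trace ((Xᵀ*Y)*(Yᵀ*X)) := by
  calc Matrix.trace ((X*Xᵀ)*(Y*Yᵀ)) = Matrix.trace (X*(Xᵀ*(Y*Yᵀ))) := by
        rw [Matrix.mul_assoc]
    _ = Matrix.trace ((Xᵀ*(Y*Yᵀ))*X) := Matrix.trace_mul_comm _ _
    _ = Matrix.trace ((Xᵀ*Y)*(Yᵀ*X)) := by simp only [Matrix.mul_assoc]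


lemma exists_max_orth {r : ℕ} (M : Matrix (Fin r) (Fin r) ℝ) :
    ∃ R : Matrix (Fin r) (Fin r) ℝ, Rᵀ * R = 1 ∧
      ∀ S : Matrix (Fin r) (Fin r) ℝ, Sᵀ * S = 1 →
        Matrix.trace (M * S) ≤ Matrix.trace (M * R) := by
  set K : Set (Matrix (Fin r) (Fin r) ℝ) := {R | Rᵀ * R = 1} with hK
  have hcont_f : Continuous fun R : Matrix (Fin r) (Fin r) ℝ => Matrix.trace (M * R) :=
    (continuous_const.matrix_mul continuous_id).matrix_trace
  have hclosed : IsClosed K := by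
    have : K = (fun R : Matrix (Fin r) (Fin r) ℝ => Rᵀ * R) ⁻¹' {1} := by
      ext R; simp [hK]
    rw [this]
    exact isClosed_singleton.preimage ((continuous_id.matrix_transpose).matrix_mul continuous_id)
  set C : Set (Matrix (Fin r) (Fin r) ℝ) :=
    Set.univ.pi (fun _ : Fin r => Set.univ.pi fun _ : Fin r => Set.Icc (-1:ℝ) 1) with hC
  have hCcomp : IsCompact C :=
    isCompact_univ_pi fun _ => isCompact_univ_pi fun _ => isCompact_Icc
  have hsub : K ⊆ C := by
    intro R hR
    intro i _ j _
    have hcol : ∑ a, R a j * R a j = 1 := by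
      have := congrFun (congrFun hR j) j
      simpa [Matrix.mul_apply, Matrix.one_apply] using this
    have hle : R i j * R i j ≤ 1 := by
      rw [← hcol]
      exact Finset.single_le_sum (f := fun a => R a j * R a j)
        (fun a _ => mul_self_nonneg _) (Finset.mem_univ i)
    constructor
    · nlinarith
    · nlinarith
  have hKcomp : IsCompact K := hCcomp.of_isClosed_subset hclosed hsub
  have h1K : (1 : Matrix (Fin r) (Fin r) ℝ) ∈ K := by
    simp [hK]
  obtain ⟨R, hRK, hmax⟩ := hKcomp.exists_isMaxOn ⟨1, h1K⟩ hcont_f.continuousOn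
  exact ⟨R, hRK, fun S hS => hmax hS⟩

lemma tu_vecMulVec_transpose {r : ℕ} (v : Fin r → ℝ) :
    (vecMulVec v v)ᵀ = vecMulVec v v := by
  ext i j; simp [Matrix.vecMulVec_apply, mul_comm]

lemma tu_vecMulVec_mul {r : ℕ} (v : Fin r → ℝ) :
    vecMulVec v v * vecMulVec v v = (v ⬝ᵥ v) • vecMulVec v v := by
  ext i j
  simp only [Matrix.mul_apply, Matrix.vecMulVec_apply, Matrix.smul_apply, smul_eq_mul,
    dotProduct, Finset.sum_mul]
  exact Finset.sum_congr rfl fun k _ => by ring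

lemma tu_trace_mul_vecMulVec {r : ℕ} (Q : Matrix (Fin r) (Fin r) ℝ) (v : Fin r → ℝ) :
    Matrix.trace (Q * vecMulVec v v) = v ⬝ᵥ Q.mulVec v := by
  simp only [Matrix.trace, Matrix.diag, Matrix.mul_apply, Matrix.vecMulVec_apply,
    dotProduct, Matrix.mulVec, Finset.mul_sum]
  exact Finset.sum_congr rfl fun i _ => Finset.sum_congr rfl fun j _ => by ring

lemma maxQ_psd {r : ℕ} (M R : Matrix (Fin r) (Fin r) ℝ) (hR : Rᵀ * R = 1)
    (hmax : ∀ S, Sᵀ * S = 1 → Matrix.trace (M * S) ≤ Matrix.trace (M * R)) :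
    ∀ v : Fin r → ℝ, 0 ≤ v ⬝ᵥ (M * R).mulVec v := by
  intro v
  rcases eq_or_ne v 0 with rfl | hv
  · simp
  have hc : 0 < v ⬝ᵥ v := by
    have : v ⬝ᵥ v = ∑ i, v i * v i := rfl
    have hne : ∃ i, v i ≠ 0 := Function.ne_iff.mp hv
    obtain ⟨i, hi⟩ := hne
    have : 0 < v i * v i := mul_self_pos.mpr hi
    calc (0:ℝ) < v i * v i := this
      _ ≤ ∑ i, v i * v i := Finset.single_le_sum (f := fun i => v i * v i)
          (fun a _ => mul_self_nonneg _) (Finset.mem_univ i)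
      _ = v ⬝ᵥ v := rfl
  set c := v ⬝ᵥ v with hcdef
  set T : Matrix (Fin r) (Fin r) ℝ := 1 - (2/c) • vecMulVec v v with hTdef
  have hTsymm : Tᵀ = T := by
    rw [hTdef, Matrix.transpose_sub, Matrix.transpose_one, Matrix.transpose_smul,
      tu_vecMulVec_transpose]
  have hc' : c ≠ 0 := ne_of_gt hc
  have hTT : T * T = 1 := by
    rw [hTdef]
    simp only [Matrix.sub_mul, Matrix.mul_sub, Matrix.one_mul, Matrix.mul_one,
      Matrix.smul_mul, Matrix.mul_smul, tu_vecMulVec_mul, smul_smul]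
    rw [← hcdef]
    match_scalars <;> (field_simp; try ring)
  have hmem : (R * T)ᵀ * (R * T) = 1 := by
    rw [Matrix.transpose_mul, Matrix.mul_assoc, hTsymm, ← Matrix.mul_assoc Rᵀ R T, hR,
      Matrix.one_mul, hTT]
  have htr := hmax (R * T) hmem
  rw [← Matrix.mul_assoc, hTdef, Matrix.mul_sub, Matrix.mul_one, Matrix.mul_smul,
    Matrix.trace_sub, Matrix.trace_smul, tu_trace_mul_vecMulVec, smul_eq_mul] at htr
  have h2c : 0 < 2 / c := by positivity
  nlinarith

lemma tu_stdBasis_transpose {r : ℕ} (i j : Fin r) :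
    (Matrix.single i j (1:ℝ))ᵀ = Matrix.single j i 1 := by
  ext a b
  simp [Matrix.single, Matrix.transpose_apply, and_comm]

lemma tu_trace_mul_stdBasis {r : ℕ} (Q : Matrix (Fin r) (Fin r) ℝ) (i j : Fin r) :
    Matrix.trace (Q * Matrix.single i j (1:ℝ)) = Q j i := by
  simp only [Matrix.trace, Matrix.diag, Matrix.mul_apply, Matrix.single, Matrix.of_apply,
    mul_ite, mul_one, mul_zero, ite_and]
  rw [Finset.sum_comm]
  simp [Finset.sum_ite_eq, Finset.sum_ite_eq']

lemma maxQ_symm {r : ℕ} (M R : Matrix (Fin r) (Fin r) ℝ) (hR : Rᵀ * R = 1)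
    (hmax : ∀ S, Sᵀ * S = 1 → Matrix.trace (M * S) ≤ Matrix.trace (M * R)) :
    (M * R)ᵀ = M * R := by
  have hpsd := maxQ_psd M R hR hmax
  set Q := M * R with hQdef
  have hdiag : ∀ i, 0 ≤ Q i i := by
    intro i
    have := hpsd (Pi.single i 1)
    simpa [dotProduct, Matrix.mulVec, Pi.single_apply, Finset.sum_ite_eq'] using this
  ext i j
  simp only [Matrix.transpose_apply]
  rcases eq_or_ne i j with rfl | hij
  · rfl
  set t := Q i i + Q j j with htdef
  set a := Q j i - Q i j with hadef
  have ht : 0 ≤ t := add_nonneg (hdiag i) (hdiag j)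
  have key : a = 0 → Q j i = Q i j := by
    intro ha; rw [hadef] at ha; exact sub_eq_zero.mp ha
  rcases eq_or_ne (t^2 + a^2) 0 with hm0 | hmne
  · exact key (by nlinarith [sq_nonneg t, sq_nonneg a])
  obtain ⟨m, hmpos, hmsq⟩ : ∃ m : ℝ, 0 < m ∧ m^2 = t^2 + a^2 :=
    ⟨Real.sqrt (t^2 + a^2), Real.sqrt_pos.mpr (lt_of_le_of_ne (by positivity) (Ne.symm hmne)),
      Real.sq_sqrt (by positivity)⟩
  have hm0' : m ≠ 0 := ne_of_gt hmpos
  obtain ⟨c0, s0, hcs, hc0, hs0⟩ : ∃ c0 s0 : ℝ, c0^2 + s0^2 = 1 ∧ m * c0 = t ∧ m * s0 = a := by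
    refine ⟨t/m, a/m, ?_, by field_simp, by field_simp⟩
    have h' : t^2 + a^2 = m^2 := hmsq.symm
    rw [div_pow, div_pow, ← add_div, h']
    exact div_self (pow_ne_zero 2 hm0')
  set X : Matrix (Fin r) (Fin r) ℝ :=
    Matrix.single i i 1 + Matrix.single j j 1 with hXdef
  set Y : Matrix (Fin r) (Fin r) ℝ :=
    Matrix.single i j 1 - Matrix.single j i 1 with hYdef
  have hXt : Xᵀ = X := by
    rw [hXdef, Matrix.transpose_add, tu_stdBasis_transpose, tu_stdBasis_transpose, add_comm]
  have hYt : Yᵀ = -Y := by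
    rw [hYdef, Matrix.transpose_sub, tu_stdBasis_transpose, tu_stdBasis_transpose]
    simp
  have hXX : X * X = X := by
    simp only [hXdef, Matrix.mul_add, Matrix.add_mul, Matrix.single_mul_single_same,
      mul_one]
    rw [Matrix.single_mul_single_of_ne (h := hij.symm), Matrix.single_mul_single_of_ne (h := hij)]
    abel
  have hXY : X * Y = Y := by
    simp only [hXdef, hYdef, Matrix.mul_sub, Matrix.add_mul, Matrix.single_mul_single_same,
      mul_one]
    rw [Matrix.single_mul_single_of_ne (h := hij.symm), Matrix.single_mul_single_of_ne (h := hij)]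
    abel
  have hYX : Y * X = Y := by
    simp only [hXdef, hYdef, Matrix.sub_mul, Matrix.mul_add, Matrix.single_mul_single_same,
      mul_one]
    rw [Matrix.single_mul_single_of_ne (h := hij), Matrix.single_mul_single_of_ne (h := hij.symm)]
    abel
  have hYY : Y * Y = -X := by
    simp only [hXdef, hYdef, Matrix.sub_mul, Matrix.mul_sub, Matrix.single_mul_single_same,
      mul_one]
    rw [Matrix.single_mul_single_of_ne (h := hij), Matrix.single_mul_single_of_ne (h := hij.symm)]
    abel
  set T : Matrix (Fin r) (Fin r) ℝ := 1 + (c0 - 1) • X + s0 • Y with hTdef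
  have hTt : Tᵀ = 1 + (c0 - 1) • X - s0 • Y := by
    rw [hTdef, Matrix.transpose_add, Matrix.transpose_add, Matrix.transpose_one,
      Matrix.transpose_smul, Matrix.transpose_smul, hXt, hYt]
    simp [sub_eq_add_neg]
  have hTT : Tᵀ * T = 1 := by
    rw [hTt, hTdef]
    simp only [Matrix.mul_add, Matrix.add_mul, Matrix.sub_mul, Matrix.mul_sub,
      Matrix.one_mul, Matrix.mul_one, Matrix.smul_mul, Matrix.mul_smul, hXX, hXY, hYX, hYY,
      smul_smul, smul_neg]
    match_scalars
    all_goals (first | ring1 | linear_combination hcs | linear_combination -hcs |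
      linear_combination 2*hcs | linear_combination -2*hcs)
  have hSmem : (R * T)ᵀ * (R * T) = 1 := by
    rw [Matrix.transpose_mul, Matrix.mul_assoc, ← Matrix.mul_assoc Rᵀ R T, hR,
      Matrix.one_mul, hTT]
  have hmem := hmax (R * T) hSmem
  have htr : Matrix.trace (M * (R * T)) = Matrix.trace Q + (c0 - 1) * t + s0 * a := by
    rw [← Matrix.mul_assoc, ← hQdef, hTdef, Matrix.mul_add, Matrix.mul_add, Matrix.mul_one,
      Matrix.mul_smul, Matrix.mul_smul, Matrix.trace_add, Matrix.trace_add, Matrix.trace_smul,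
      Matrix.trace_smul, hXdef, hYdef, Matrix.mul_add, Matrix.mul_sub, Matrix.trace_add,
      Matrix.trace_sub, tu_trace_mul_stdBasis, tu_trace_mul_stdBasis, tu_trace_mul_stdBasis,
      tu_trace_mul_stdBasis]
    simp only [smul_eq_mul]
    try rw [htdef, hadef]
    try ring
  rw [htr] at hmem
  have hineq : s0 * a ≤ (1 - c0) * t := by linarith
  have e1 : m * (s0 * a) = a * a := by
    rw [show m * (s0 * a) = (m * s0) * a from by ring, hs0]
  have e2 : m * ((1 - c0) * t) = m * t - t * t := by
    rw [show m * ((1 - c0) * t) = m * t - (m * c0) * t from by ring, hc0]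
  have keyineq : a * a + t * t ≤ t * m := by
    have h := mul_le_mul_of_nonneg_left hineq (le_of_lt hmpos)
    rw [e1, e2] at h
    linarith
  have hmt : m ≤ t := by nlinarith [hmpos, hmsq]
  have ha2 : a^2 ≤ 0 := by nlinarith [hmsq, hmpos, ht, hmt]
  have ha : a = 0 := by
    have h0 : a^2 = 0 := le_antisymm ha2 (sq_nonneg a)
    exact pow_eq_zero_iff two_ne_zero |>.mp h0
  exact key ha

lemma key_ineq (A B Q : Matrix (Fin r) (Fin r) ℝ) (s : ℝ) (hs : 0 ≤ s)
    (hA : Aᵀ = A) (hB : Bᵀ = B) (hQ : Qᵀ = Q)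
    (hQpsd : ∀ v : Fin r → ℝ, 0 ≤ v ⬝ᵥ Q.mulVec v)
    (hGpsd : ∀ v : Fin r → ℝ, 0 ≤ v ⬝ᵥ (A + B - (2:ℝ)•Q).mulVec v)
    (hAlow : ∀ v : Fin r → ℝ, v ⬝ᵥ v = 1 → s ≤ v ⬝ᵥ A.mulVec v) :
    2*(Real.sqrt 2 - 1) * s * Matrix.trace (A + B - (2:ℝ)•Q) ≤
      Matrix.trace (A*A) + Matrix.trace (B*B) - 2*Matrix.trace (Q*Q) := by
  set G : Matrix (Fin r) (Fin r) ℝ := A + B - (2:ℝ)•Q with hGdef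
  have hGsymm : Gᵀ = G := by
    simp [hGdef, Matrix.transpose_add, Matrix.transpose_smul, hA, hB, hQ]
  have hG : G.IsHermitian := by
    rw [Matrix.IsHermitian, Matrix.conjTranspose_eq_transpose_of_trivial, hGsymm]
  set O : Matrix (Fin r) (Fin r) ℝ := (hG.eigenvectorUnitary : Matrix (Fin r) (Fin r) ℝ) with hOdef
  have hstar : star O = Oᵀ := by
    rw [Matrix.star_eq_conjTranspose, Matrix.conjTranspose_eq_transpose_of_trivial]
  have hO1 : Oᵀ * O = 1 := by
    rw [← hstar]; exact Matrix.mem_unitaryGroup_iff'.mp hG.eigenvectorUnitary.2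
  have hO2 : O * Oᵀ = 1 := by
    rw [← hstar]; exact Matrix.mem_unitaryGroup_iff.mp hG.eigenvectorUnitary.2
  set lam := hG.eigenvalues with hlam
  have hdiag : Oᵀ * G * O = Matrix.diagonal lam := by
    have := hG.conjStarAlgAut_star_eigenvectorUnitary
    rw [Unitary.conjStarAlgAut_star_apply, hstar] at this
    simpa [RCLike.ofReal_real_eq_id] using this
  have hcol_unit : ∀ i, (fun a => O a i) ⬝ᵥ (fun a => O a i) = 1 := by
    intro i
    have h := congrFun (congrFun hO1 i) i
    simpa [Matrix.mul_apply, Matrix.one_apply, dotProduct] using h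
  set p : Fin r → ℝ := fun i => (Oᵀ * Q * O) i i with hpdef
  set d : Fin r → ℝ := fun i => (Oᵀ * (A - B) * O) i i with hddef
  have hp : ∀ i, 0 ≤ p i := fun i => by
    show 0 ≤ (Oᵀ * Q * O) i i
    rw [conj_diag_entry]; exact hQpsd _
  have hlam_entry : ∀ i, lam i = (Oᵀ * G * O) i i := by
    intro i; rw [hdiag]; simp [Matrix.diagonal_apply_eq]
  have hlam_nonneg : ∀ i, 0 ≤ lam i := by
    intro i; rw [hlam_entry i, conj_diag_entry]; exact hGpsd _
  have hE : G + (2:ℝ)•Q + (A - B) = (2:ℝ)•A := by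
    rw [hGdef]; module
  have hmat : (Oᵀ * G * O) + (2:ℝ)•(Oᵀ*Q*O) + Oᵀ*(A-B)*O = (2:ℝ)•(Oᵀ*A*O) := by
    have := congrArg (fun X => Oᵀ * X * O) hE
    simpa [Matrix.mul_add, Matrix.add_mul, Matrix.mul_smul, Matrix.smul_mul] using this
  have hconstr : ∀ i, 2*s ≤ lam i + 2 * p i + d i := by
    intro i
    have hAi : s ≤ (Oᵀ * A * O) i i := by
      rw [conj_diag_entry]; exact hAlow _ (hcol_unit i)
    have h := congrFun (congrFun hmat i) i
    simp only [Matrix.add_apply, Matrix.smul_apply, smul_eq_mul] at h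
    rw [hlam_entry i, hpdef, hddef]
    simp only []
    linarith [h]
  have hTrG : Matrix.trace G = ∑ i, lam i := by
    rw [← trace_conj O G hO2, hdiag, Matrix.trace_diagonal]
  have hTrGG : Matrix.trace (G*G) = ∑ i, (lam i)^2 := by
    rw [← trace_conj O (G*G) hO2, tu_conj_mul O G G hO2, hdiag,
      Matrix.diagonal_mul_diagonal, Matrix.trace_diagonal]
    simp [sq]
  have hTrQG : Matrix.trace (Q*G) = ∑ i, p i * lam i := by
    rw [← trace_conj O (Q*G) hO2, tu_conj_mul O Q G hO2, hdiag, trace_mul_diagonal']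
  have hDsymm : (Oᵀ*(A-B)*O)ᵀ = Oᵀ*(A-B)*O := by
    rw [Matrix.transpose_mul, Matrix.transpose_mul, Matrix.transpose_transpose,
      Matrix.transpose_sub, hA, hB, Matrix.mul_assoc]
  have hTrDD : ∑ i, (d i)^2 ≤ Matrix.trace ((A-B)*(A-B)) := by
    have h1 : Matrix.trace ((A-B)*(A-B)) = Matrix.trace ((Oᵀ*(A-B)*O)*(Oᵀ*(A-B)*O)) := by
      rw [← tu_conj_mul O _ _ hO2, trace_conj _ _ hO2]
    rw [h1]
    generalize hM : Oᵀ*(A-B)*O = M at hDsymm h1 ⊢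
    have h2 : Matrix.trace (M*M) = ∑ i, ∑ j, (M i j)^2 := by
      simp only [Matrix.trace, Matrix.diag, Matrix.mul_apply, sq]
      refine Finset.sum_congr rfl fun i _ => Finset.sum_congr rfl fun j _ => ?_
      have h3 := congrFun (congrFun hDsymm j) i
      simp only [Matrix.transpose_apply] at h3
      rw [← h3]
    rw [h2]
    have hd : ∀ i, d i = M i i := fun i => by rw [hddef]; simp only []; rw [hM]
    refine Finset.sum_le_sum fun i _ => ?_
    rw [hd i]
    exact Finset.single_le_sum (f := fun j => (M i j)^2) (fun j _ => sq_nonneg _)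
      (Finset.mem_univ i)
  have hsplit := trace_split A B Q
  rw [← hGdef] at hsplit
  have hmain : ∑ i, (2*(Real.sqrt 2 - 1) * s * lam i) ≤
      ∑ i, ((lam i)^2/2 + 2 * p i * lam i + (d i)^2/2) := by
    refine Finset.sum_le_sum fun i _ => ?_
    exact scalar_core (lam i) (p i) (d i) s (hlam_nonneg i) (hp i) hs (hconstr i)
  have hexp : ∑ i, ((lam i)^2/2 + 2 * p i * lam i + (d i)^2/2)
      = (∑ i, (lam i)^2)/2 + 2 * (∑ i, p i * lam i) + (∑ i, (d i)^2)/2 := by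
    rw [Finset.sum_add_distrib, Finset.sum_add_distrib, ← Finset.sum_div, ← Finset.sum_div,
      Finset.mul_sum]
    refine congrArg₂ (· + ·) (congrArg₂ (· + ·) rfl ?_) rfl
    exact Finset.sum_congr rfl fun i _ => by ring
  rw [hexp] at hmain
  have hlhs : 2*(Real.sqrt 2 - 1) * s * Matrix.trace G = ∑ i, (2*(Real.sqrt 2 - 1) * s * lam i) := by
    rw [hTrG, Finset.mul_sum]
  rw [hlhs, hsplit]
  have := hTrDD
  linarith [hmain, hTrGG, hTrQG, hTrDD]

end TuAux

/-- For any `U, V ∈ ℝ^{n×r}`,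
`‖UUᵀ − VVᵀ‖_F² ≥ 2(√2 − 1)·σ_r(U)²·DIST(U,V)²`. -/
theorem fnorm_sq_outer_diff_ge {n r : ℕ} (U V : Matrix (Fin n) (Fin r) ℝ) :
    fnorm (U * Uᵀ - V * Vᵀ) ^ 2 ≥
      2 * (Real.sqrt 2 - 1) * singVal U r ^ 2 * DIST U V ^ 2 := by
  obtain ⟨R, hR, hmax⟩ := exists_max_orth (Uᵀ * V)
  have hQsymm : (Uᵀ * (V * R))ᵀ = Uᵀ * (V * R) := by
    rw [← Matrix.mul_assoc]
    exact maxQ_symm _ _ hR hmax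
  have hQpsd : ∀ v, 0 ≤ v ⬝ᵥ (Uᵀ * (V * R)).mulVec v := by
    intro v
    have := maxQ_psd _ _ hR hmax v
    rwa [Matrix.mul_assoc] at this
  set W := V * R with hWdef
  set Q := Uᵀ * W with hQdef
  set A := Uᵀ * U with hAdef
  set B := Wᵀ * W with hBdef
  set H := U - W with hHdef
  clear_value H B A Q W
  have hA : Aᵀ = A := by rw [hAdef, Matrix.transpose_mul, Matrix.transpose_transpose]
  have hB : Bᵀ = B := by rw [hBdef, Matrix.transpose_mul, Matrix.transpose_transpose]
  have hWU : Wᵀ * U = Q := by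
    rw [← hQsymm, hQdef, Matrix.transpose_mul, Matrix.transpose_transpose]
  have hHG : Hᵀ * H = A + B - (2:ℝ)•Q := by
    rw [hHdef, Matrix.transpose_sub, Matrix.sub_mul, Matrix.mul_sub, Matrix.mul_sub,
      hWU, ← hQdef, ← hAdef, ← hBdef, two_smul]
    abel
  have hGpsd : ∀ v : Fin r → ℝ, 0 ≤ v ⬝ᵥ (A + B - (2:ℝ)•Q).mulVec v := by
    intro v
    rw [← hHG, ← Matrix.mulVec_mulVec, Matrix.dotProduct_mulVec, Matrix.vecMul_transpose]
    exact tu_dot_self_nonneg _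
  have hAlow : ∀ v : Fin r → ℝ, v ⬝ᵥ v = 1 → singVal U r ^ 2 ≤ v ⬝ᵥ A.mulVec v := by
    intro v hv
    rw [hAdef]
    exact singVal_sq_le_quad U v hv
  have hKEY := key_ineq A B Q (singVal U r ^ 2) (sq_nonneg _) hA hB hQsymm hQpsd hGpsd hAlow
  -- identify LHS
  have hRR : R * Rᵀ = 1 := mul_eq_one_comm.mp hR
  have hVV : V * Vᵀ = W * Wᵀ := by
    rw [hWdef, Matrix.transpose_mul, ← Matrix.mul_assoc, Matrix.mul_assoc V R Rᵀ, hRR,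
      Matrix.mul_one]
  have hXt : (U*Uᵀ - W*Wᵀ)ᵀ = U*Uᵀ - W*Wᵀ := by
    rw [Matrix.transpose_sub, Matrix.transpose_mul, Matrix.transpose_mul,
      Matrix.transpose_transpose, Matrix.transpose_transpose]
  have hLHS : fnorm (U * Uᵀ - V * Vᵀ) ^ 2
      = Matrix.trace (A*A) + Matrix.trace (B*B) - 2*Matrix.trace (Q*Q) := by
    rw [fnorm_sq, hVV]
    show Matrix.trace ((U*Uᵀ - W*Wᵀ)ᵀ * (U*Uᵀ - W*Wᵀ)) = _
    rw [hXt, Matrix.sub_mul, Matrix.mul_sub, Matrix.mul_sub, Matrix.trace_sub,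
      Matrix.trace_sub, Matrix.trace_sub, trace_outer_pair U U, trace_outer_pair U W,
      trace_outer_pair W U, trace_outer_pair W W, hWU, ← hQdef, ← hAdef, ← hBdef]
    ring
  -- DIST bound
  have hDist : DIST U V ^ 2 ≤ Matrix.trace (A + B - (2:ℝ)•Q) := by
    have h1 : DIST U V ≤ fnorm H := by
      rw [hHdef, hWdef]
      exact DIST_le U V R hR
    have h2 : fnorm H ^ 2 = Matrix.trace (A + B - (2:ℝ)•Q) := by
      rw [fnorm_sq, ← hHG]; rfl
    calc DIST U V ^ 2 ≤ fnorm H ^ 2 := pow_le_pow_left₀ (DIST_nonneg U V) h1 2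
      _ = _ := h2
  have hcoef : 0 ≤ 2 * (Real.sqrt 2 - 1) * singVal U r ^ 2 := by
    have h1 : (1:ℝ) ≤ Real.sqrt 2 := by
      nlinarith [Real.sq_sqrt (show (0:ℝ) ≤ 2 by norm_num), Real.sqrt_nonneg 2]
    have := sq_nonneg (singVal U r)
    nlinarith
  have hchain : 2 * (Real.sqrt 2 - 1) * singVal U r ^ 2 * DIST U V ^ 2
      ≤ 2 * (Real.sqrt 2 - 1) * singVal U r ^ 2 * Matrix.trace (A + B - (2:ℝ)•Q) :=
    mul_le_mul_of_nonneg_left hDist hcoef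
  rw [ge_iff_le, hLHS]
  calc 2 * (Real.sqrt 2 - 1) * singVal U r ^ 2 * DIST U V ^ 2
      ≤ 2 * (Real.sqrt 2 - 1) * singVal U r ^ 2 * Matrix.trace (A + B - (2:ℝ)•Q) := hchain
    _ = 2 * (Real.sqrt 2 - 1) * (singVal U r ^ 2) * Matrix.trace (A + B - (2:ℝ)•Q) := by ring
    _ ≤ _ := hKEY
end
end

section
/- For any matrices U, V ∈ ℝ^{n×r}, ‖UUᵀ − VVᵀ‖_F² ≤ 2·(‖U‖₂² + ‖V‖₂²)·‖U − V‖_F². -/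
open Matrix

attribute [local instance] Matrix.frobeniusNormedAddCommGroup Matrix.frobeniusNormedSpace

noncomputable section

lemma finner_self_eq {n m : ℕ} (A : Matrix (Fin n) (Fin m) ℝ) :
    finner A A = ∑ j, ∑ i, (A i j) ^ 2 := by
  simp [finner, Matrix.trace, Matrix.mul_apply, Matrix.diag, sq]

lemma fnorm_transpose {n m : ℕ} (A : Matrix (Fin n) (Fin m) ℝ) : fnorm Aᵀ = fnorm A := by
  unfold fnorm
  congr 1
  rw [finner_self_eq, finner_self_eq, Finset.sum_comm]
  simp

lemma fnorm_mul_le {n m k : ℕ} (A : Matrix (Fin n) (Fin m) ℝ) (B : Matrix (Fin m) (Fin k) ℝ) :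
    fnorm (A * B) ≤ specNorm A * fnorm B := by
  have h : finner (A * B) (A * B) ≤ specNorm A ^ 2 * finner B B := by
    rw [finner_self_eq, finner_self_eq, Finset.mul_sum]
    apply Finset.sum_le_sum
    intro j _
    set x : EuclideanSpace ℝ (Fin m) := (WithLp.equiv 2 _).symm (fun i => B i j) with hx
    have hnx : ‖x‖ ^ 2 = ∑ i, (B i j) ^ 2 := by
      rw [EuclideanSpace.norm_eq, Real.sq_sqrt (by positivity)]
      simp [hx, sq_abs]
    have hAx : Matrix.toEuclideanLin A x = (WithLp.equiv 2 _).symm (A *ᵥ fun i => B i j) := by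
      rw [hx]; exact Matrix.toEuclideanLin_apply_piLp_toLp _ _
    have hle : ‖Matrix.toEuclideanLin A x‖ ≤ specNorm A * ‖x‖ := by
      have := (LinearMap.toContinuousLinearMap (Matrix.toEuclideanLin A)).le_opNorm x
      simpa [specNorm] using this
    have hsq : ‖Matrix.toEuclideanLin A x‖ ^ 2 ≤ (specNorm A * ‖x‖) ^ 2 := by
      exact pow_le_pow_left₀ (norm_nonneg _) hle 2
    have hnAx : ‖Matrix.toEuclideanLin A x‖ ^ 2 = ∑ i, ((A * B) i j) ^ 2 := by
      rw [hAx, EuclideanSpace.norm_eq, Real.sq_sqrt (by positivity)]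
      refine Finset.sum_congr rfl fun i _ => ?_
      rw [Real.norm_eq_abs, sq_abs]
      simp [WithLp.equiv_symm_apply, PiLp.toLp_apply, Matrix.mulVec, Matrix.mul_apply, dotProduct]
    calc ∑ i, ((A * B) i j) ^ 2 = ‖Matrix.toEuclideanLin A x‖ ^ 2 := hnAx.symm
      _ ≤ (specNorm A * ‖x‖) ^ 2 := hsq
      _ = specNorm A ^ 2 * ∑ i, (B i j) ^ 2 := by rw [mul_pow, hnx]
  calc fnorm (A * B) = Real.sqrt (finner (A * B) (A * B)) := rfl
    _ ≤ Real.sqrt (specNorm A ^ 2 * finner B B) := Real.sqrt_le_sqrt h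
    _ = specNorm A * fnorm B := by
        rw [Real.sqrt_mul (by positivity), Real.sqrt_sq (specNorm_nonneg A)]; rfl

/-- For any `U, V ∈ ℝ^{n×r}`,
`‖UUᵀ − VVᵀ‖_F² ≤ 2·(‖U‖₂² + ‖V‖₂²)·‖U − V‖_F²`. -/
theorem fnorm_sq_outer_diff_le {n r : ℕ} (U V : Matrix (Fin n) (Fin r) ℝ) :
    fnorm (U * Uᵀ - V * Vᵀ) ^ 2 ≤
      2 * (specNorm U ^ 2 + specNorm V ^ 2) * fnorm (U - V) ^ 2 := by
  have key : fnorm (U * Uᵀ - V * Vᵀ) ≤ specNorm U * fnorm (U - V) + specNorm V * fnorm (U - V) := by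
    have hdecomp : U * Uᵀ - V * Vᵀ = U * (U - V)ᵀ + ((U - V) * Vᵀ) := by
      rw [Matrix.transpose_sub, Matrix.mul_sub, Matrix.sub_mul]; abel
    have htr : ((U - V) * Vᵀ)ᵀ = V * (U - V)ᵀ := by
      rw [Matrix.transpose_mul, Matrix.transpose_transpose]
    calc fnorm (U * Uᵀ - V * Vᵀ) = fnorm (U * (U - V)ᵀ + (U - V) * Vᵀ) := by rw [hdecomp]
      _ ≤ fnorm (U * (U - V)ᵀ) + fnorm ((U - V) * Vᵀ) := by
          simp only [fnorm_eq_norm]; exact norm_add_le _ _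
      _ ≤ specNorm U * fnorm (U - V) + specNorm V * fnorm (U - V) := by
          have h1 : fnorm (U * (U - V)ᵀ) ≤ specNorm U * fnorm (U - V) := by
            have := fnorm_mul_le U (U - V)ᵀ
            rwa [fnorm_transpose] at this
          have h2 : fnorm ((U - V) * Vᵀ) ≤ specNorm V * fnorm (U - V) := by
            have := fnorm_mul_le V (U - V)ᵀ
            rw [fnorm_transpose] at this
            rw [← fnorm_transpose ((U - V) * Vᵀ), htr]
            exact this
          linarith
  have h1 : 0 ≤ fnorm (U * Uᵀ - V * Vᵀ) := fnorm_nonneg _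
  have h2 : fnorm (U * Uᵀ - V * Vᵀ) ^ 2 ≤ (specNorm U * fnorm (U - V) + specNorm V * fnorm (U - V)) ^ 2 :=
    pow_le_pow_left₀ h1 key 2
  have h3 : (specNorm U * fnorm (U - V) + specNorm V * fnorm (U - V)) ^ 2 ≤
      2 * (specNorm U ^ 2 + specNorm V ^ 2) * fnorm (U - V) ^ 2 := by
    nlinarith [sq_nonneg (specNorm U - specNorm V), sq_nonneg (fnorm (U - V)), specNorm_nonneg U, specNorm_nonneg V]
  linarith
end
end
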